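/- If {v_i}_{i=1}^{d²} ⊆ ℂ^d is a set of d² unit vectors satisfying |⟨v_i, v_j⟩|² = 1/(d+1) for all i ≠ j, then for every X ∈ M_d(ℂ), (1/d)·Σ_{i=1}^{d²} (v_i v_i*) X (v_i v_i*) = (1/(d+1))·(X + tr(X)·I_d). -/

import Mathlib

open Matrix

set_option linter.unusedSectionVars false

namespace SicAux

variable {n : Type*} [Fintype n] [DecidableEq n]

noncomputable def outP (x y : n → ℂ) : Matrix n n ℂ :=
  fun p q => x p * (starRingEnd ℂ) (y q)

lemma outP_conjTranspose (x : n → ℂ) : (outP x x)ᴴ = outP x x := by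
  ext p q
  simp [outP, conjTranspose_apply, mul_comm]

lemma trace_outP (x : n → ℂ) : (outP x x).trace = ∑ q, x q * (starRingEnd ℂ) (x q) := by
  simp [trace, Matrix.diag, outP]

lemma trace_outP_mul_outP (x y : n → ℂ) :
    (outP x x * outP y y).trace =
      (∑ q, (starRingEnd ℂ) (x q) * y q) * (starRingEnd ℂ) (∑ q, (starRingEnd ℂ) (x q) * y q) := by
  simp only [trace, Matrix.diag, mul_apply, outP, map_sum, _root_.map_mul,
    Complex.conj_conj]
  rw [Finset.sum_mul_sum, Finset.sum_comm]
  refine Finset.sum_congr rfl fun p _ => Finset.sum_congr rfl fun q _ => ?_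
  ring

end SicAux

namespace SicAux

variable {n : Type*} [Fintype n] [DecidableEq n]

def swapM (d : ℕ) : Matrix (Fin d × Fin d) (Fin d × Fin d) ℂ :=
  fun p q => if p = (q.2, q.1) then 1 else 0

lemma swapM_conjTranspose (d : ℕ) : (swapM d)ᴴ = swapM d := by
  ext p q
  have : (q = (p.2, p.1)) ↔ (p = (q.2, q.1)) := by
    constructor <;> (rintro rfl; rfl)
  simp only [swapM, conjTranspose_apply, this]
  by_cases h : p = (q.2, q.1) <;> simp [h]

lemma swapM_mul_swapM (d : ℕ) : swapM d * swapM d = 1 := by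
  ext p q
  simp only [mul_apply, swapM, mul_ite, mul_one, mul_zero, Finset.sum_ite_eq',
    Finset.mem_univ, if_true]
  rcases q with ⟨q1, q2⟩
  simp [one_apply, Prod.ext_iff, and_comm]

lemma trace_swapM (d : ℕ) : (swapM d).trace = (d : ℂ) := by
  simp only [trace, Matrix.diag, swapM]
  rw [Fintype.sum_prod_type]
  have : ∀ a b : Fin d, (if ((a, b) : Fin d × Fin d) = (b, a) then (1 : ℂ) else 0)
      = if b = a then 1 else 0 := by
    intro a b
    by_cases h : b = a
    · subst h; simp
    · rw [if_neg (fun hp => h ((Prod.ext_iff.mp hp).1.symm)), if_neg h]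
  simp only [this, Finset.sum_ite_eq', Finset.mem_univ, if_true]
  simp

lemma outP_mul_swapM {d : ℕ} (x : Fin d × Fin d → ℂ)
    (hx : ∀ a b, x (a, b) = x (b, a)) : outP x x * swapM d = outP x x := by
  ext p q
  simp only [mul_apply, swapM, mul_ite, mul_one, mul_zero, Finset.sum_ite_eq',
    Finset.mem_univ, if_true, outP]
  rcases q with ⟨q1, q2⟩
  rw [show x (q2, q1) = x (q1, q2) from hx q2 q1]

lemma eq_zero_of_trace_self_mul_self {M : Matrix n n ℂ} (hH : Mᴴ = M)
    (h : (M * M).trace = 0) : M = 0 := by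
  have h2 : (Mᴴ * M).trace = 0 := by rw [hH]; exact h
  have key : ∑ p, ∑ q, ‖M q p‖ ^ 2 = 0 := by
    have := congrArg Complex.re h2
    simpa [trace, Matrix.diag, mul_apply, conjTranspose_apply, Complex.conj_mul',
      Complex.re_sum, ← Complex.ofReal_pow] using this
  ext p q
  have hnn : ∀ i ∈ (Finset.univ : Finset n), (0:ℝ) ≤ ∑ q, ‖M q i‖ ^ 2 :=
    fun i _ => Finset.sum_nonneg fun j _ => sq_nonneg _
  have h1 := (Finset.sum_eq_zero_iff_of_nonneg hnn).mp key q (Finset.mem_univ q)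
  have h0 := (Finset.sum_eq_zero_iff_of_nonneg
    (fun j (_ : j ∈ Finset.univ) => sq_nonneg ‖M j q‖)).mp h1 p (Finset.mem_univ p)
  have habs : ‖M p q‖ = 0 := by
    have := sq_eq_zero_iff.mp h0
    exact this
  simpa using norm_eq_zero.mp habs

end SicAux

open SicAux

/-- The rank-one matrix `x y*` with entries `(x y*)_{k,l} = x_k * conj (y_l)`. -/
noncomputable def outer {d : ℕ} (x y : Fin d → ℂ) : Matrix (Fin d) (Fin d) ℂ :=
  fun k l => x k * (starRingEnd ℂ) (y l)

/-- If `{v_i}_{i=1}^{d²} ⊆ ℂ^d` are unit vectors with `|⟨v_i, v_j⟩|² = 1/(d+1)` for `i ≠ j`,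
then for every `X ∈ M_d(ℂ)`,
`(1/d) ∑_i (v_i v_i*) X (v_i v_i*) = (1/(d+1)) (X + tr(X) I_d)`. -/
theorem sic_gives_Z_channel {d : ℕ} (hd : 2 ≤ d)
    (v : Fin (d ^ 2) → EuclideanSpace ℂ (Fin d))
    (hv : ∀ i, ‖v i‖ = 1)
    (hang : ∀ i j, i ≠ j → ‖(inner ℂ (v i) (v j) : ℂ)‖ ^ 2 = 1 / (d + 1))
    (X : Matrix (Fin d) (Fin d) ℂ) :
    ((d : ℂ))⁻¹ • ∑ i, outer (v i) (v i) * X * outer (v i) (v i) =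
      ((d : ℂ) + 1)⁻¹ • (X + X.trace • (1 : Matrix (Fin d) (Fin d) ℂ)) := by
    classical
  have hd0 : (d : ℂ) ≠ 0 := Nat.cast_ne_zero.mpr (by omega)
  have hd1 : (d : ℂ) + 1 ≠ 0 := by
    intro h
    have : ((d + 1 : ℕ) : ℂ) = 0 := by push_cast; exact h
    exact (Nat.cast_ne_zero.mpr (Nat.succ_ne_zero d)) this
  -- the inner products
  set g : Fin (d ^ 2) → Fin (d ^ 2) → ℂ :=
    fun i j => ∑ a, (starRingEnd ℂ) (v i a) * v j a with hg
  have hg_inner : ∀ i j, g i j = (inner ℂ (v i) (v j) : ℂ) := by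
    intro i j
    rw [hg]
    simp [PiLp.inner_apply, RCLike.inner_apply, mul_comm]
  have hgii : ∀ i, g i i = 1 := by
    intro i
    rw [hg_inner, inner_self_eq_norm_sq_to_K, hv]
    norm_num
  have h4 : ∀ i j, g i j * (starRingEnd ℂ) (g i j)
      = if i = j then 1 else ((d : ℂ) + 1)⁻¹ := by
    intro i j
    by_cases h : i = j
    · subst h; rw [hgii]; simp
    · rw [if_neg h, Complex.mul_conj]
      have h1 : Complex.normSq (g i j) = 1 / (d + 1) := by
        rw [hg_inner, ← Complex.sq_norm]
        exact hang i j h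
      rw [h1]
      push_cast
      rw [one_div]
  -- the symmetric vectors
  set w : Fin (d ^ 2) → (Fin d × Fin d) → ℂ :=
    fun i p => v i p.1 * v i p.2 with hw
  set S : Matrix (Fin d × Fin d) (Fin d × Fin d) ℂ := ∑ i, outP (w i) (w i) with hS
  set c : ℂ := (d : ℂ) / ((d : ℂ) + 1) with hc
  -- inner products of the w's
  have hw_inner : ∀ i j, (∑ q, (starRingEnd ℂ) (w i q) * w j q) = g i j * g i j := by
    intro i j
    have hgg : g i j * g i j = ∑ a, ∑ b,
        ((starRingEnd ℂ) (v i a) * v j a) * ((starRingEnd ℂ) (v i b) * v j b) := by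
      simp only [hg]
      exact Finset.sum_mul_sum _ _ _ _
    rw [hgg, Fintype.sum_prod_type]
    refine Finset.sum_congr rfl fun a _ => Finset.sum_congr rfl fun b _ => ?_
    simp only [hw, _root_.map_mul]
    ring
  have hnorm' : ∀ i, (∑ a, v i a * (starRingEnd ℂ) (v i a)) = 1 := by
    intro i
    have : (∑ a, v i a * (starRingEnd ℂ) (v i a)) = (starRingEnd ℂ) (g i i) := by
      simp only [hg, map_sum, _root_.map_mul, Complex.conj_conj]
    rw [this, hgii, RingHom.map_one]
  have htrS : S.trace = (d : ℂ) ^ 2 := by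
    rw [hS, trace_sum]
    have : ∀ i, (outP (w i) (w i)).trace = 1 := by
      intro i
      rw [trace_outP, Fintype.sum_prod_type]
      calc ∑ a, ∑ b, w i (a, b) * (starRingEnd ℂ) (w i (a, b))
          = ∑ a, ∑ b, (v i a * (starRingEnd ℂ) (v i a)) * (v i b * (starRingEnd ℂ) (v i b)) := by
            refine Finset.sum_congr rfl fun a _ => Finset.sum_congr rfl fun b _ => ?_
            simp only [hw, _root_.map_mul]
            ring
        _ = (∑ a, v i a * (starRingEnd ℂ) (v i a)) * (∑ b, v i b * (starRingEnd ℂ) (v i b)) :=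
            (Finset.sum_mul_sum _ _ _ _).symm
        _ = 1 := by rw [hnorm' i, one_mul]
    simp only [this, Finset.sum_const, Finset.card_univ, Fintype.card_fin, nsmul_eq_mul, mul_one]
    push_cast
    ring
  have htrS2 : (S * S).trace
      = (d : ℂ) ^ 2 * (1 + ((d : ℂ) ^ 2 - 1) * (((d : ℂ) + 1)⁻¹) ^ 2) := by
    rw [hS, Finset.sum_mul_sum, trace_sum]
    simp only [trace_sum, trace_outP_mul_outP, hw_inner]
    have hterm : ∀ i j, (g i j * g i j) * (starRingEnd ℂ) (g i j * g i j)
        = if i = j then 1 else (((d : ℂ) + 1)⁻¹) ^ 2 := by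
      intro i j
      have : (g i j * g i j) * (starRingEnd ℂ) (g i j * g i j)
          = (g i j * (starRingEnd ℂ) (g i j)) ^ 2 := by
        rw [_root_.map_mul]; ring
      rw [this, h4]
      by_cases h : i = j <;> simp [h]
    simp only [hterm]
    have hrow : ∀ i : Fin (d ^ 2), (∑ j, if i = j then (1 : ℂ) else (((d : ℂ) + 1)⁻¹) ^ 2)
        = (1 - (((d : ℂ) + 1)⁻¹) ^ 2) + (d : ℂ) ^ 2 * (((d : ℂ) + 1)⁻¹) ^ 2 := by
      intro i
      have : ∀ j : Fin (d ^ 2), (if i = j then (1 : ℂ) else (((d : ℂ) + 1)⁻¹) ^ 2)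
          = (if i = j then (1 - (((d : ℂ) + 1)⁻¹) ^ 2) else 0) + (((d : ℂ) + 1)⁻¹) ^ 2 := by
        intro j
        by_cases h : i = j <;> simp [h]
      simp only [this, Finset.sum_add_distrib, Finset.sum_ite_eq, Finset.mem_univ, if_true,
        Finset.sum_const, Finset.card_univ, Fintype.card_fin, nsmul_eq_mul]
      push_cast
      ring
    simp only [hrow, Finset.sum_const, Finset.card_univ, Fintype.card_fin, nsmul_eq_mul]
    push_cast
    ring
  have hSswap : S * swapM d = S := by
    rw [hS, Finset.sum_mul]
    exact Finset.sum_congr rfl fun i _ =>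
      outP_mul_swapM (w i) (fun a b => by simp only [hw]; ring)
  have hSH : Sᴴ = S := by
    rw [hS, conjTranspose_sum]
    exact Finset.sum_congr rfl fun i _ => outP_conjTranspose (w i)
  -- the 2-design identity
  have hkey : S = c • ((1 : Matrix (Fin d × Fin d) (Fin d × Fin d) ℂ) + swapM d) := by
    set T : Matrix (Fin d × Fin d) (Fin d × Fin d) ℂ := 1 + swapM d with hT
    set M : Matrix (Fin d × Fin d) (Fin d × Fin d) ℂ := S - c • T with hM
    have hcconj : (starRingEnd ℂ) c = c := by
      simp only [hc, map_div₀, map_add, map_natCast, _root_.map_one]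
    have hTH : Tᴴ = T := by
      rw [hT, conjTranspose_add, conjTranspose_one, swapM_conjTranspose]
    have hMH : Mᴴ = M := by
      rw [hM, conjTranspose_sub, hSH, conjTranspose_smul, hTH, Complex.star_def, hcconj]
    have htrST : (S * T).trace = 2 * (d : ℂ) ^ 2 := by
      rw [hT, Matrix.mul_add, Matrix.mul_one, hSswap, trace_add, htrS]
      ring
    have htrTT : (T * T).trace = 2 * ((d : ℂ) ^ 2 + (d : ℂ)) := by
      rw [hT, Matrix.add_mul, Matrix.mul_add, Matrix.mul_add, swapM_mul_swapM]
      simp only [Matrix.one_mul, Matrix.mul_one]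
      rw [trace_add, trace_add, trace_add, trace_one, trace_swapM]
      simp only [Fintype.card_prod, Fintype.card_fin]
      push_cast
      ring
    have htrMM : (M * M).trace = 0 := by
      rw [hM, Matrix.sub_mul, Matrix.mul_sub, Matrix.mul_sub]
      simp only [Matrix.smul_mul, Matrix.mul_smul, smul_smul, trace_sub, trace_smul,
        htrS2, htrST, trace_mul_comm T S, htrTT]
      simp only [smul_eq_mul, hc]
      field_simp
      ring
    have hM0 : M = 0 := eq_zero_of_trace_self_mul_self hMH htrMM
    have := sub_eq_zero.mp (hM ▸ hM0)
    rw [this, hT]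
  -- pointwise form of the 2-design identity
  have hpt : ∀ p q : Fin d × Fin d, (∑ i, w i p * (starRingEnd ℂ) (w i q))
      = c * ((if p = q then 1 else 0) + (if p = (q.2, q.1) then 1 else 0)) := by
    intro p q
    have h := congrFun (congrFun hkey p) q
    simpa [hS, Matrix.sum_apply, outP, Matrix.smul_apply, Matrix.add_apply, Matrix.one_apply,
      swapM, smul_eq_mul] using h
  ext k l
  simp only [Matrix.smul_apply, Matrix.sum_apply, Matrix.add_apply, Matrix.one_apply,
    smul_eq_mul]
  have hA : ∀ i, (outer (v i) (v i) * X * outer (v i) (v i)) k l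
      = ∑ b, ∑ a, X a b * (w i (k, b) * (starRingEnd ℂ) (w i (a, l))) := by
    intro i
    rw [Matrix.mul_apply]
    refine Finset.sum_congr rfl fun b _ => ?_
    rw [Matrix.mul_apply, Finset.sum_mul]
    refine Finset.sum_congr rfl fun a _ => ?_
    simp only [outer, hw, _root_.map_mul]
    ring
  have hsum : (∑ i, (outer (v i) (v i) * X * outer (v i) (v i)) k l)
      = c * (X k l + (if k = l then 1 else 0) * X.trace) := by
    calc (∑ i, (outer (v i) (v i) * X * outer (v i) (v i)) k l)
        = ∑ i, ∑ b, ∑ a, X a b * (w i (k, b) * (starRingEnd ℂ) (w i (a, l))) :=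
          Finset.sum_congr rfl fun i _ => hA i
      _ = ∑ b, ∑ a, ∑ i, X a b * (w i (k, b) * (starRingEnd ℂ) (w i (a, l))) := by
          rw [Finset.sum_comm]
          exact Finset.sum_congr rfl fun b _ => Finset.sum_comm
      _ = ∑ b, ∑ a, X a b * (c * ((if ((k, b) : Fin d × Fin d) = (a, l) then (1:ℂ) else 0)
            + (if ((k, b) : Fin d × Fin d) = (l, a) then 1 else 0))) := by
          refine Finset.sum_congr rfl fun b _ => Finset.sum_congr rfl fun a _ => ?_
          rw [← Finset.mul_sum, hpt (k, b) (a, l)]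
      _ = c * (X k l + (if k = l then 1 else 0) * X.trace) := by
          by_cases h : k = l
          · subst h
            simp only [Prod.mk.injEq, mul_add, mul_ite, mul_one, mul_zero, ite_and,
              Finset.sum_add_distrib, Finset.sum_ite_eq, Finset.sum_ite_eq',
              Finset.mem_univ, if_true, trace, Matrix.diag, Finset.mul_sum]
            congr 1
            · ring
            · exact Finset.sum_congr rfl fun x _ => by ring
          · simp only [Prod.mk.injEq, h, false_and, if_false, add_zero, mul_add, mul_ite,
              mul_one, mul_zero, ite_and, Finset.sum_add_distrib, Finset.sum_ite_eq,
              Finset.sum_ite_eq', Finset.mem_univ, if_true, Finset.sum_const_zero]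
            ring
  rw [hsum]
  rw [hc]
  field_simp
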